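/- Let F ⊆ ℝ^q be a nonempty closed convex set, Ω ⊆ ℝ^q nonempty, r > 0, and x a point with x ∉ Ω_r := {y : ρ_F^Ω(y) ≤ r} and ρ_F^Ω(x) < ∞. Then ρ_F^Ω(x) = ρ_F^{Ω_r}(x) + r. -/

import Mathlib

open scoped Pointwise ENNReal

/-- Set-based Minkowski gauge with values in `[0, ∞]` (convention `inf ∅ = ∞`). -/
noncomputable def rhoSE {q : ℕ} (F Ω : Set (EuclideanSpace ℝ (Fin q)))
    (x : EuclideanSpace ℝ (Fin q)) : ℝ≥0∞ :=
  sInf {c : ℝ≥0∞ | ∃ t : ℝ, 0 ≤ t ∧ c = ENNReal.ofReal t ∧ x ∈ Ω + t • F}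

lemma rhoSE_le_of_mem {q : ℕ} {F Ω : Set (EuclideanSpace ℝ (Fin q))}
    {x : EuclideanSpace ℝ (Fin q)} {t : ℝ} (ht : 0 ≤ t) (hx : x ∈ Ω + t • F) :
    rhoSE F Ω x ≤ ENNReal.ofReal t :=
  sInf_le ⟨t, ht, rfl, hx⟩

lemma exists_of_rhoSE_lt {q : ℕ} {F Ω : Set (EuclideanSpace ℝ (Fin q))}
    {x : EuclideanSpace ℝ (Fin q)} {s : ℝ} (h : rhoSE F Ω x < ENNReal.ofReal s) :
    ∃ t : ℝ, 0 ≤ t ∧ t < s ∧ x ∈ Ω + t • F := by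
  obtain ⟨c, hc, hcs⟩ := sInf_lt_iff.mp h
  obtain ⟨t, ht0, rfl, hxt⟩ := hc
  refine ⟨t, ht0, ?_, hxt⟩
  by_contra hts
  exact absurd (ENNReal.ofReal_le_ofReal (not_lt.mp hts)) (not_le.mpr hcs)

theorem stmt13 {q : ℕ} (F Ω : Set (EuclideanSpace ℝ (Fin q)))
    (hFne : F.Nonempty) (hFcl : IsClosed F) (hFconv : Convex ℝ F)
    (h0 : (0 : EuclideanSpace ℝ (Fin q)) ∈ interior F)
    (hΩne : Ω.Nonempty) (r : ℝ) (hr : 0 < r)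
    (x : EuclideanSpace ℝ (Fin q))
    (hx : x ∉ {y | rhoSE F Ω y ≤ ENNReal.ofReal r})
    (hfin : rhoSE F Ω x ≠ ⊤) :
    rhoSE F Ω x = rhoSE F {y | rhoSE F Ω y ≤ ENNReal.ofReal r} x + ENNReal.ofReal r := by
  set Ωr : Set (EuclideanSpace ℝ (Fin q)) := {y | rhoSE F Ω y ≤ ENNReal.ofReal r} with hΩrdef
  have hsum : ∀ a b : ℝ, 0 ≤ a → 0 ≤ b → Ω + a • F + b • F = Ω + (a + b) • F := by
    intro a b ha hb
    rw [add_assoc, hFconv.add_smul ha hb]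
  apply le_antisymm
  · -- rhoSE F Ω x ≤ rhoSE F Ωr x + r
    rw [← tsub_le_iff_right]
    apply le_sInf
    rintro c ⟨s, hs0, rfl, hxs⟩
    rw [tsub_le_iff_right]
    -- show rhoSE F Ω x ≤ ofReal s + ofReal r
    refine ENNReal.le_of_forall_pos_le_add ?_
    intro ε hε _
    obtain ⟨y, hy, z, hz, rfl⟩ := Set.mem_add.mp hxs
    have hε0 : (0:ℝ) < ε := hε
    have hylt : rhoSE F Ω y < ENNReal.ofReal (r + ε) := by
      refine lt_of_le_of_lt hy ?_
      exact ENNReal.ofReal_lt_ofReal_iff (by linarith) |>.mpr (by linarith)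
    obtain ⟨t, ht0, htlt, hyt⟩ := exists_of_rhoSE_lt hylt
    have hmem : y + z ∈ Ω + (t + s) • F := by
      rw [← hsum t s ht0 hs0]
      exact Set.add_mem_add hyt hz
    calc rhoSE F Ω (y + z) ≤ ENNReal.ofReal (t + s) :=
          rhoSE_le_of_mem (by linarith) hmem
      _ ≤ ENNReal.ofReal (s + r) + ε := by
          rw [← ENNReal.ofReal_coe_nnreal, ← ENNReal.ofReal_add (by linarith) ε.coe_nonneg]
          exact ENNReal.ofReal_le_ofReal (by push_cast; linarith)
      _ = ENNReal.ofReal s + ENNReal.ofReal r + ε := by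
          rw [ENNReal.ofReal_add hs0 hr.le]
  · -- rhoSE F Ωr x + r ≤ rhoSE F Ω x
    apply le_sInf
    rintro c ⟨t, ht0, rfl, hxt⟩
    have hrx : ENNReal.ofReal r < rhoSE F Ω x := not_le.mp hx
    have hrt : r < t := by
      have h1 : rhoSE F Ω x ≤ ENNReal.ofReal t := rhoSE_le_of_mem ht0 hxt
      have := hrx.trans_le h1
      exact (ENNReal.ofReal_lt_ofReal_iff (lt_of_le_of_lt hr.le
        ((ENNReal.ofReal_lt_ofReal_iff_of_nonneg hr.le).mp this))).mp this
    have hsub : Ω + r • F ⊆ Ωr := fun y hy => rhoSE_le_of_mem hr.le hy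
    have hmem : x ∈ Ωr + (t - r) • F := by
      have : x ∈ Ω + r • F + (t - r) • F := by
        rw [hsum r (t - r) hr.le (by linarith)]
        simpa using hxt
      exact Set.add_subset_add_right hsub this
    have h2 : rhoSE F Ωr x ≤ ENNReal.ofReal (t - r) := rhoSE_le_of_mem (by linarith) hmem
    calc rhoSE F Ωr x + ENNReal.ofReal r ≤ ENNReal.ofReal (t - r) + ENNReal.ofReal r :=
          add_le_add_left h2 _
      _ = ENNReal.ofReal t := by rw [← ENNReal.ofReal_add (by linarith) hr.le]; ring_nf
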